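/- Let m be a positive integer, X a connected simplicial set, and p a simplicial distribution on the scenario (X, ⊔_{Z_m} Δ_{Z_m}). Then: (0) for each j ∈ ZMod m the total mass λ_j := Σ_{a : Fin(n+1) → ZMod m} p_x(j,a) is the same for every simplex x ∈ X_n, and Σ_j λ_j = 1; moreover, for each j with λ_j ≠ 0 the family p^{(j)} given by p^{(j)}_x(a) = p_x(j,a)/λ_j is a simplicial distribution on (X, Δ_{Z_m}). (1) p is noncontextual if and only if p^{(j)} is noncontextual for every j with λ_j ≠ 0. (2) p is a vertex of sDist(X, ⊔_{Z_m} Δ_{Z_m}) if and only if there is j ∈ ZMod m with λ_j = 1 such that p^{(j)} is a vertex of sDist(X, Δ_{Z_m}). -/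

import Mathlib

open CategoryTheory Simplicial Opposite
open scoped NNReal BigOperators

universe u

/-- A distribution on a type `S`: a finitely supported function to `ℝ≥0` with total sum 1. -/
structure FDist (S : Type u) : Type u where
  toFun : S → ℝ≥0
  finite_support : (Function.support toFun).Finite
  sum_one : ∑ᶠ s, toFun s = 1

/-- A simplicial distribution on the simplicial scenario `(X, Y)`. -/
structure SDist (X Y : SSet.{u}) : Type u where
  d : ∀ n : ℕ, X _⦋n⦌ → FDist (Y _⦋n⦌)
  compat : ∀ {k n : ℕ} (α : (⦋k⦌ : SimplexCategory) ⟶ ⦋n⦌) (x : X _⦋n⦌) (y : Y _⦋k⦌),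
    (d k (X.map α.op x)).toFun y = ∑ᶠ y' ∈ {y' : Y _⦋n⦌ | Y.map α.op y' = y}, (d n x).toFun y'

/-- The simplicial set `Δ_{ℤ_m}` whose `n`-simplices are functions `Fin (n+1) → ZMod m`. -/
def DeltaZ (m : ℕ) : SSet.{0} where
  obj U := Fin (U.unop.len + 1) → ZMod m
  map α := TypeCat.ofHom (fun a => a ∘ α.unop.toOrderHom)
  map_id := by intros; rfl
  map_comp := by intros; rfl

/-- The disjoint union `⊔_{ℤ_m} Δ_{ℤ_m}` of `m` copies of `Δ_{ℤ_m}`. -/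
def DeltaZSum (m : ℕ) : SSet.{0} where
  obj U := ZMod m × (Fin (U.unop.len + 1) → ZMod m)
  map α := TypeCat.ofHom (fun x => (x.1, x.2 ∘ α.unop.toOrderHom))
  map_id := by intros; rfl
  map_comp := by intros; rfl

instance (m : ℕ) (U : SimplexCategoryᵒᵖ) : AddCommGroup ((DeltaZ m).obj U) :=
  Pi.addCommGroup

/-- The edge relation on vertices of a simplicial set. -/
def EdgeRel (X : SSet.{u}) (a b : X _⦋0⦌) : Prop :=
  ∃ σ : X _⦋1⦌, X.δ 1 σ = a ∧ X.δ 0 σ = b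

/-- A simplicial set is connected if any two vertices are related by the equivalence
relation generated by the edge relation. -/
def SConnected (X : SSet.{u}) : Prop :=
  ∀ a b : X _⦋0⦌, Relation.EqvGen (EdgeRel X) a b

/-- A simplicial distribution is noncontextual if it is a mixture of deterministic
distributions. -/
def Noncontextual {X Y : SSet.{u}} (p : SDist X Y) : Prop :=
  ∃ Q : FDist (X ⟶ Y), ∀ (n : ℕ) (x : X _⦋n⦌) (y : Y _⦋n⦌),
    (p.d n x).toFun y = ∑ᶠ φ ∈ setOf (fun φ : X ⟶ Y => φ.app (op ⦋n⦌) x = y), Q.toFun φ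

/-- A vertex (extreme point) of the convex set of simplicial distributions. -/
def IsVertex {X Y : SSet.{u}} (p : SDist X Y) : Prop :=
  ∀ (q q' : SDist X Y) (t : ℝ), 0 < t → t < 1 →
    (∀ (n : ℕ) (x : X _⦋n⦌) (y : Y _⦋n⦌),
      ((p.d n x).toFun y : ℝ) = t * ((q.d n x).toFun y : ℝ) + (1 - t) * ((q'.d n x).toFun y : ℝ)) →
    q = q'

/-- `q ⪯ p` : the support of `q` is contained in that of `p`. -/
def Pre {X Y : SSet.{u}} (q p : SDist X Y) : Prop :=
  ∀ (n : ℕ) (x : X _⦋n⦌) (y : Y _⦋n⦌), (q.d n x).toFun y ≠ 0 → (p.d n x).toFun y ≠ 0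

-- instances
instance (m : ℕ) [NeZero m] (U : SimplexCategoryᵒᵖ) : Fintype ((DeltaZ m).obj U) :=
  Pi.instFintype (α := Fin (U.unop.len + 1)) (β := fun _ => ZMod m)
instance (m : ℕ) [NeZero m] (U : SimplexCategoryᵒᵖ) : Fintype ((DeltaZSum m).obj U) :=
  instFintypeProd (ZMod m) (Fin (U.unop.len + 1) → ZMod m)
instance (m : ℕ) (U : SimplexCategoryᵒᵖ) : DecidableEq ((DeltaZ m).obj U) :=
  Fintype.decidablePiFintype (α := Fin (U.unop.len + 1)) (β := fun _ => ZMod m)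
instance (m : ℕ) (U : SimplexCategoryᵒᵖ) : DecidableEq ((DeltaZSum m).obj U) :=
  instDecidableEqProd (α := ZMod m) (β := Fin (U.unop.len + 1) → ZMod m)


lemma FDist.ext' {S : Type u} {f g : FDist S} (h : f.toFun = g.toFun) : f = g := by
  cases f; cases g; cases h; rfl

lemma SDist.ext' {X Y : SSet.{u}} {q q' : SDist X Y}
    (h : ∀ (n : ℕ) (x : X _⦋n⦌) (y : Y _⦋n⦌), (q.d n x).toFun y = (q'.d n x).toFun y) :
    q = q' := by
  cases q; cases q'
  congr 1
  funext n x
  exact FDist.ext' (funext fun y => h n x y)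




section Helpers
open Finset

lemma finsum_mem_fin {α : Type*} [Fintype α] (s : Set α) [DecidablePred (· ∈ s)] (f : α → ℝ≥0) :
    ∑ᶠ x ∈ s, f x = ∑ x ∈ Finset.univ.filter (· ∈ s), f x := by
  classical
  rw [finsum_mem_eq_toFinset_sum]
  congr 1
  ext x; simp

lemma fiber_sum {α β : Type*} [Fintype β] (f : α → ℝ≥0)
    (hf : (Function.support f).Finite) (g : α → β) :
    ∑ b : β, ∑ᶠ x ∈ {x | g x = b}, f x = ∑ᶠ x, f x := by
  classical
  rw [finsum_eq_sum f hf]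
  have h : ∀ b, ∑ᶠ x ∈ {x | g x = b}, f x
      = ∑ x ∈ hf.toFinset.filter (fun x => g x = b), f x := by
    intro b
    rw [finsum_mem_eq_sum_filter _ _ hf]
    congr 1
  simp_rw [h]
  exact Finset.sum_fiberwise _ _ _

lemma finsum_div' {α : Type*} (f : α → ℝ≥0) (c : ℝ≥0)
    (hf : (Function.support f).Finite) :
    ∑ᶠ x, f x / c = (∑ᶠ x, f x) / c := by
  classical
  have hsub : Function.support (fun x => f x / c) ⊆ hf.toFinset := by
    intro x hx
    simp only [Function.mem_support] at hx
    have : f x ≠ 0 := by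
      intro h0; apply hx; simp [h0]
    simpa using this
  rw [finsum_eq_sum_of_support_subset _ hsub,
      finsum_eq_sum_of_support_subset f (by simp : Function.support f ⊆ ↑hf.toFinset),
      Finset.sum_div]

lemma finsum_mem_div' {α : Type*} (f : α → ℝ≥0) (s : Set α) (c : ℝ≥0)
    (hf : (Function.support f).Finite) :
    ∑ᶠ x ∈ s, f x / c = (∑ᶠ x ∈ s, f x) / c := by
  classical
  rw [finsum_mem_def, finsum_mem_def]
  have h : Set.indicator s (fun x => f x / c) = fun x => Set.indicator s f x / c := by
    funext x; by_cases hx : x ∈ s <;> simp [hx]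
  rw [h]
  refine finsum_div' _ c (hf.subset ?_)
  rw [Set.support_indicator]
  exact Set.inter_subset_right

lemma finsum_mem_mul_left' {α : Type*} (f : α → ℝ≥0) (s : Set α) (c : ℝ≥0)
    (hf : (Function.support f).Finite) :
    ∑ᶠ x ∈ s, c * f x = c * ∑ᶠ x ∈ s, f x := by
  classical
  rw [finsum_mem_def, finsum_mem_def]
  have h : Set.indicator s (fun x => c * f x) = fun x => c * Set.indicator s f x := by
    funext x; by_cases hx : x ∈ s <;> simp [hx]
  rw [h]
  refine (mul_finsum (fun x => Set.indicator s f x) c).symm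

lemma sum_prod_filter {J A : Type*} [Fintype J] [DecidableEq J] [Fintype A]
    (j : J) (f : J × A → ℝ≥0) (P : A → Prop) [DecidablePred P] :
    ∑ y ∈ Finset.univ.filter (fun y : J × A => y.1 = j ∧ P y.2), f y
      = ∑ a ∈ Finset.univ.filter P, f (j, a) := by
  rw [Finset.sum_filter, Finset.sum_filter, Fintype.sum_prod_type]
  have h : ∀ i : J, (∑ a : A, if i = j ∧ P a then f (i, a) else 0)
      = if i = j then (∑ a : A, if P a then f (i, a) else 0) else 0 := by
    intro i
    by_cases hi : i = j
    · subst hi; simp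
    · simp [hi]
  simp_rw [h]
  rw [Finset.sum_ite_eq' Finset.univ j]
  simp

lemma sum_fst_filter {J A : Type*} [Fintype J] [DecidableEq J] [Fintype A]
    (j : J) (f : J × A → ℝ≥0) :
    ∑ y ∈ Finset.univ.filter (fun y : J × A => y.1 = j), f y = ∑ a : A, f (j, a) := by
  classical
  have := sum_prod_filter j f (fun _ => True)
  simpa using this

end Helpers

section Aux
open Finset
variable {m : ℕ} [NeZero m] {X : SSet.{0}}

/-- Concrete spelling of the simplices of `DeltaZSum`. -/
abbrev ZCell (m n : ℕ) : Type := ZMod m × (Fin (n + 1) → ZMod m)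
/-- Concrete spelling of the simplices of `DeltaZ`. -/
abbrev DCell (m n : ℕ) : Type := Fin (n + 1) → ZMod m

lemma finsum_mem_pred {α : Type*} [Fintype α] (P : α → Prop) [DecidablePred P] (f : α → ℝ≥0) :
    ∑ᶠ x ∈ {x | P x}, f x = ∑ x ∈ Finset.univ.filter P, f x := by
  classical
  rw [finsum_mem_fin]
  apply Finset.sum_congr
  · apply Finset.filter_congr
    intro x _
    simp [Set.mem_setOf_eq]
  · intros; rfl

noncomputable def massOf (p : SDist X (DeltaZSum m)) (j : ZMod m) (n : ℕ) (x : X _⦋n⦌) : ℝ≥0 :=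
  ∑ a : DCell m n, (p.d n x).toFun (j, a)

lemma compatF (p : SDist X (DeltaZSum m)) {k n : ℕ} (α : (⦋k⦌ : SimplexCategory) ⟶ ⦋n⦌)
    (x : X _⦋n⦌) (j : ZMod m) (b : DCell m k) :
    (p.d k (X.map α.op x)).toFun (j, b)
      = ∑ y' ∈ Finset.univ.filter
          (fun y' : ZCell m n => y'.1 = j ∧ y'.2 ∘ α.toOrderHom = b),
          (p.d n x).toFun y' := by
  classical
  rw [p.compat α x (j, b)]
  refine (finsum_mem_pred
    (fun y' : ZCell m n => (DeltaZSum m).map α.op y' = (j, b)) _).trans ?_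
  apply Finset.sum_congr
  · apply Finset.filter_congr
    intro y' _
    constructor
    · intro h; exact ⟨congrArg Prod.fst h, congrArg Prod.snd h⟩
    · rintro ⟨h1, h2⟩; exact Prod.ext h1 h2
  · intros; rfl

lemma compatD (s : SDist X (DeltaZ m)) {k n : ℕ} (α : (⦋k⦌ : SimplexCategory) ⟶ ⦋n⦌)
    (x : X _⦋n⦌) (a : DCell m k) :
    (s.d k (X.map α.op x)).toFun a
      = ∑ a' ∈ Finset.univ.filter
          (fun a' : DCell m n => a' ∘ α.toOrderHom = a),
          (s.d n x).toFun a' := by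
  classical
  rw [s.compat α x a]
  refine (finsum_mem_pred
    (fun a' : DCell m n => (DeltaZ m).map α.op a' = a) _).trans ?_
  apply Finset.sum_congr
  · apply Finset.filter_congr
    intro a' _
    exact Iff.rfl
  · intros; rfl

lemma massOf_map (p : SDist X (DeltaZSum m)) {k n : ℕ} (α : (⦋k⦌ : SimplexCategory) ⟶ ⦋n⦌)
    (x : X _⦋n⦌) (j : ZMod m) : massOf p j k (X.map α.op x) = massOf p j n x := by
  classical
  show ∑ b : DCell m k, (p.d k (X.map α.op x)).toFun (j, b) = _
  calc ∑ b : DCell m k, (p.d k (X.map α.op x)).toFun (j, b)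
      = ∑ b : DCell m k, ∑ y' ∈ Finset.univ.filter
            (fun y' : ZCell m n => y'.1 = j ∧ y'.2 ∘ α.toOrderHom = b),
            (p.d n x).toFun y' :=
        Finset.sum_congr rfl (fun b _ => compatF p α x j b)
    _ = ∑ b : DCell m k, ∑ y' ∈ (Finset.univ.filter
            (fun y' : ZCell m n => y'.1 = j)).filter
            (fun y' => y'.2 ∘ α.toOrderHom = b),
            (p.d n x).toFun y' := by
        simp only [Finset.filter_filter]
    _ = ∑ y' ∈ Finset.univ.filter (fun y' : ZCell m n => y'.1 = j),
          (p.d n x).toFun y' :=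
        Finset.sum_fiberwise _ _ _
    _ = ∑ a : DCell m n, (p.d n x).toFun (j, a) := sum_fst_filter j _
    _ = massOf p j n x := rfl

lemma massOf_edge (p : SDist X (DeltaZSum m)) (j : ZMod m) {a b : X _⦋0⦌}
    (h : EdgeRel X a b) : massOf p j 0 a = massOf p j 0 b := by
  obtain ⟨σ, h1, h0⟩ := h
  rw [← h1, ← h0]
  have e1 := massOf_map p (SimplexCategory.δ 1) σ j
  have e0 := massOf_map p (SimplexCategory.δ 0) σ j
  exact e1.trans e0.symm

lemma massOf_vertex_const (hX : SConnected X) (p : SDist X (DeltaZSum m)) (j : ZMod m)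
    (a b : X _⦋0⦌) : massOf p j 0 a = massOf p j 0 b := by
  induction hX a b with
  | rel u v h => exact massOf_edge p j h
  | refl u => rfl
  | symm u v _ ih => exact ih.symm
  | trans u v w _ _ ih1 ih2 => exact ih1.trans ih2

lemma massOf_const (hX : SConnected X) (p : SDist X (DeltaZSum m)) (j : ZMod m)
    {n : ℕ} (x : X _⦋n⦌) (pt : X _⦋0⦌) : massOf p j n x = massOf p j 0 pt := by
  have h := massOf_map p (SimplexCategory.const ⦋0⦌ ⦋n⦌ 0) x j
  exact h.symm.trans (massOf_vertex_const hX p j _ pt)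

end Aux

section Aux2
open Finset
variable {m : ℕ} [NeZero m] {X : SSet.{0}}

lemma total_sum (p : SDist X (DeltaZSum m)) {n : ℕ} (x : X _⦋n⦌) :
    ∑ y : ZCell m n, (p.d n x).toFun y = 1 := by
  refine (finsum_eq_sum_of_fintype _).symm.trans ?_
  exact (p.d n x).sum_one

lemma mass_sum (p : SDist X (DeltaZSum m)) {n : ℕ} (x : X _⦋n⦌) :
    ∑ j : ZMod m, massOf p j n x = 1 :=
  (Fintype.sum_prod_type (f := fun y : ZCell m n => (p.d n x).toFun y)).symm.trans
    (total_sum p x)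

lemma single_le_mass (p : SDist X (DeltaZSum m)) (j : ZMod m) {n : ℕ} (x : X _⦋n⦌)
    (a : DCell m n) : (p.d n x).toFun (j, a) ≤ massOf p j n x :=
  Finset.single_le_sum (f := fun a : DCell m n => (p.d n x).toFun (j, a))
    (fun _ _ => zero_le) (Finset.mem_univ a)

/-- The component of `p` at color `j`. -/
noncomputable def component (p : SDist X (DeltaZSum m)) (j : ZMod m) (lam : ℝ≥0)
    (h : ∀ (n : ℕ) (x : X _⦋n⦌), massOf p j n x = lam) (hlam : lam ≠ 0) :
    SDist X (DeltaZ m) where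
  d n x :=
  { toFun := fun a => (p.d n x).toFun (j, a) / lam
    finite_support := Set.toFinite _
    sum_one := by
      have e1 : ∑ᶠ a : DCell m n, (p.d n x).toFun (j, a) / lam
          = ∑ a : DCell m n, (p.d n x).toFun (j, a) / lam := finsum_eq_sum_of_fintype _
      refine e1.trans ?_
      rw [← Finset.sum_div]
      have e2 : ∑ a : DCell m n, (p.d n x).toFun (j, a) = lam := h n x
      rw [e2, div_self hlam] }
  compat := by
    intro k n α x a
    classical
    show (p.d k (X.map α.op x)).toFun (j, a) / lam
        = ∑ᶠ a' ∈ setOf (fun a' : DCell m n => (DeltaZ m).map α.op a' = a),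
            (p.d n x).toFun (j, a') / lam
    calc (p.d k (X.map α.op x)).toFun (j, a) / lam
        = (∑ y' ∈ Finset.univ.filter
              (fun y' : ZCell m n => y'.1 = j ∧ y'.2 ∘ α.toOrderHom = a),
              (p.d n x).toFun y') / lam := by rw [compatF p α x j a]; congr
      _ = (∑ a' ∈ Finset.univ.filter
              (fun a' : DCell m n => a' ∘ α.toOrderHom = a),
              (p.d n x).toFun (j, a')) / lam := by
            rw [sum_prod_filter j (fun y' : ZCell m n => (p.d n x).toFun y')
              (fun a' : DCell m n => a' ∘ α.toOrderHom = a)]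
      _ = ∑ a' ∈ Finset.univ.filter
              (fun a' : DCell m n => a' ∘ α.toOrderHom = a),
              (p.d n x).toFun (j, a') / lam := Finset.sum_div _ _ _
      _ = ∑ᶠ a' ∈ setOf (fun a' : DCell m n => a' ∘ α.toOrderHom = a),
              (p.d n x).toFun (j, a') / lam :=
            (finsum_mem_pred (fun a' : DCell m n => a' ∘ α.toOrderHom = a) _).symm
      _ = ∑ᶠ a' ∈ setOf (fun a' : DCell m n => (DeltaZ m).map α.op a' = a),
              (p.d n x).toFun (j, a') / lam := rfl

lemma component_apply (p : SDist X (DeltaZSum m)) (j : ZMod m) (lam : ℝ≥0)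
    (h : ∀ (n : ℕ) (x : X _⦋n⦌), massOf p j n x = lam) (hlam : lam ≠ 0)
    (n : ℕ) (x : X _⦋n⦌) (a : DCell m n) :
    ((component p j lam h hlam).d n x).toFun a = (p.d n x).toFun (j, a) / lam := rfl

/-- Lift a simplicial distribution on `DeltaZ` to `DeltaZSum`, concentrated at color `j`. -/
noncomputable def liftS (j : ZMod m) (s : SDist X (DeltaZ m)) : SDist X (DeltaZSum m) where
  d n x :=
  { toFun := fun y => if y.1 = j then (s.d n x).toFun y.2 else 0
    finite_support := Set.toFinite _
    sum_one := by
      classical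
      have e1 : ∑ᶠ y : ZCell m n, (if y.1 = j then (s.d n x).toFun y.2 else 0)
          = ∑ y : ZCell m n, (if y.1 = j then (s.d n x).toFun y.2 else 0) :=
        finsum_eq_sum_of_fintype _
      refine e1.trans ?_
      rw [Fintype.sum_prod_type]
      have h : ∀ i : ZMod m,
          (∑ a : DCell m n, if i = j then (s.d n x).toFun a else 0)
          = if i = j then (∑ a : DCell m n, (s.d n x).toFun a) else 0 := by
        intro i; by_cases hi : i = j <;> simp [hi]
      simp_rw [h]
      rw [Finset.sum_ite_eq' Finset.univ j]
      simp only [Finset.mem_univ, if_true]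
      refine (finsum_eq_sum_of_fintype _).symm.trans ?_
      exact (s.d n x).sum_one }
  compat := by
    intro k n α x y
    classical
    show (if y.1 = j then (s.d k (X.map α.op x)).toFun y.2 else 0)
        = ∑ᶠ y' ∈ setOf (fun y' : ZCell m n => (DeltaZSum m).map α.op y' = y),
            (if y'.1 = j then (s.d n x).toFun y'.2 else 0)
    have e0 : ∑ᶠ y' ∈ setOf (fun y' : ZCell m n => (DeltaZSum m).map α.op y' = y),
            (if y'.1 = j then (s.d n x).toFun y'.2 else 0)
        = ∑ y' ∈ Finset.univ.filter
            (fun y' : ZCell m n => y'.1 = y.1 ∧ y'.2 ∘ α.toOrderHom = y.2),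
            (if y'.1 = j then (s.d n x).toFun y'.2 else 0) := by
      refine (finsum_mem_pred
        (fun y' : ZCell m n => (DeltaZSum m).map α.op y' = y) _).trans ?_
      apply Finset.sum_congr
      · apply Finset.filter_congr
        intro y' _
        constructor
        · intro h; exact ⟨congrArg Prod.fst h, congrArg Prod.snd h⟩
        · rintro ⟨h1, h2⟩; exact Prod.ext h1 h2
      · intros; rfl
    have e1 : ∑ y' ∈ Finset.univ.filter
            (fun y' : ZCell m n => y'.1 = y.1 ∧ y'.2 ∘ α.toOrderHom = y.2),
            (if y'.1 = j then (s.d n x).toFun y'.2 else 0)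
        = ∑ a' ∈ Finset.univ.filter
            (fun a' : DCell m n => a' ∘ α.toOrderHom = y.2),
            (if y.1 = j then (s.d n x).toFun a' else 0) :=
      sum_prod_filter y.1 (fun y' : ZCell m n => if y'.1 = j then (s.d n x).toFun y'.2 else 0)
        (fun a' : DCell m n => a' ∘ α.toOrderHom = y.2)
    rw [e0, e1]
    by_cases hy : y.1 = j
    · simp only [hy, if_true]
      exact (compatD s α x y.2)
    · simp only [hy, if_false]
      exact (Finset.sum_const_zero).symm

lemma liftS_apply (j : ZMod m) (s : SDist X (DeltaZ m)) (n : ℕ) (x : X _⦋n⦌)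
    (y : (DeltaZSum m) _⦋n⦌) :
    ((liftS j s).d n x).toFun y = if y.1 = j then (s.d n x).toFun y.2 else 0 := rfl

end Aux2

section Aux3
open Finset
variable {m : ℕ} [NeZero m] {X : SSet.{0}}

/-- The distribution conditioned on the complement of color `j₁`. -/
noncomputable def complS (p : SDist X (DeltaZSum m)) (j₁ : ZMod m) (lam : ZMod m → ℝ≥0)
    (hmass : ∀ (j : ZMod m) (n : ℕ) (x : X _⦋n⦌), massOf p j n x = lam j)
    (hsum : ∑ j : ZMod m, lam j = 1) (hlt : lam j₁ < 1) : SDist X (DeltaZSum m) where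
  d n x :=
  { toFun := fun y => if y.1 = j₁ then 0 else (p.d n x).toFun y / (1 - lam j₁)
    finite_support := Set.toFinite _
    sum_one := by
      classical
      have hne : (1 : ℝ≥0) - lam j₁ ≠ 0 := by
        intro h0
        exact absurd (tsub_eq_zero_iff_le.mp h0) (not_le.mpr hlt)
      have hsumerase : ∑ i ∈ Finset.univ.erase j₁, lam i = 1 - lam j₁ := by
        apply eq_tsub_of_add_eq
        rw [Finset.sum_erase_add Finset.univ _ (Finset.mem_univ j₁)]
        exact hsum
      have e1 : ∑ᶠ y : ZCell m n, (if y.1 = j₁ then 0 else (p.d n x).toFun y / (1 - lam j₁))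
          = ∑ y : ZCell m n, (if y.1 = j₁ then 0 else (p.d n x).toFun y / (1 - lam j₁)) :=
        finsum_eq_sum_of_fintype _
      refine e1.trans ?_
      rw [Fintype.sum_prod_type]
      have h : ∀ i : ZMod m,
          (∑ a : DCell m n, if i = j₁ then 0 else (p.d n x).toFun (i, a) / (1 - lam j₁))
          = if i = j₁ then 0 else lam i / (1 - lam j₁) := by
        intro i
        by_cases hi : i = j₁
        · simp [hi]
        · simp only [hi, if_false]
          rw [← Finset.sum_div]
          rw [show ∑ a : DCell m n, (p.d n x).toFun (i, a) = lam i from hmass i n x]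
      simp_rw [h]
      rw [← Finset.sum_erase_add Finset.univ _ (Finset.mem_univ j₁)]
      rw [if_pos rfl, add_zero]
      rw [Finset.sum_congr rfl
        (fun i hi => if_neg (Finset.ne_of_mem_erase hi))]
      rw [← Finset.sum_div, hsumerase, div_self hne] }
  compat := by
    intro k n α x y
    classical
    show (if y.1 = j₁ then 0 else (p.d k (X.map α.op x)).toFun y / (1 - lam j₁))
        = ∑ᶠ y' ∈ setOf (fun y' : ZCell m n => (DeltaZSum m).map α.op y' = y),
            (if y'.1 = j₁ then 0 else (p.d n x).toFun y' / (1 - lam j₁))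
    have e0 : ∑ᶠ y' ∈ setOf (fun y' : ZCell m n => (DeltaZSum m).map α.op y' = y),
            (if y'.1 = j₁ then 0 else (p.d n x).toFun y' / (1 - lam j₁))
        = ∑ y' ∈ Finset.univ.filter
            (fun y' : ZCell m n => y'.1 = y.1 ∧ y'.2 ∘ α.toOrderHom = y.2),
            (if y'.1 = j₁ then 0 else (p.d n x).toFun y' / (1 - lam j₁)) := by
      refine (finsum_mem_pred
        (fun y' : ZCell m n => (DeltaZSum m).map α.op y' = y) _).trans ?_
      apply Finset.sum_congr
      · apply Finset.filter_congr
        intro y' _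
        constructor
        · intro h; exact ⟨congrArg Prod.fst h, congrArg Prod.snd h⟩
        · rintro ⟨h1, h2⟩; exact Prod.ext h1 h2
      · intros; rfl
    have e1 : ∑ y' ∈ Finset.univ.filter
            (fun y' : ZCell m n => y'.1 = y.1 ∧ y'.2 ∘ α.toOrderHom = y.2),
            (if y'.1 = j₁ then 0 else (p.d n x).toFun y' / (1 - lam j₁))
        = ∑ a' ∈ Finset.univ.filter
            (fun a' : DCell m n => a' ∘ α.toOrderHom = y.2),
            (if y.1 = j₁ then 0 else (p.d n x).toFun (y.1, a') / (1 - lam j₁)) :=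
      sum_prod_filter y.1
        (fun y' : ZCell m n => if y'.1 = j₁ then 0 else (p.d n x).toFun y' / (1 - lam j₁))
        (fun a' : DCell m n => a' ∘ α.toOrderHom = y.2)
    rw [e0, e1]
    by_cases hy : y.1 = j₁
    · simp only [hy, if_pos rfl, if_true]
      exact Finset.sum_const_zero.symm
    · simp only [hy, if_false]
      rw [← Finset.sum_div]
      have e2 : ∑ a' ∈ Finset.univ.filter
            (fun a' : DCell m n => a' ∘ α.toOrderHom = y.2),
            (p.d n x).toFun (y.1, a')
          = (p.d k (X.map α.op x)).toFun (y.1, y.2) :=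
        ((compatF p α x y.1 y.2).trans
          (sum_prod_filter y.1 (fun y' : ZCell m n => (p.d n x).toFun y')
            (fun a' : DCell m n => a' ∘ α.toOrderHom = y.2))).symm
      rw [e2]
      rfl

lemma complS_apply (p : SDist X (DeltaZSum m)) (j₁ : ZMod m) (lam : ZMod m → ℝ≥0)
    (hmass : ∀ (j : ZMod m) (n : ℕ) (x : X _⦋n⦌), massOf p j n x = lam j)
    (hsum : ∑ j : ZMod m, lam j = 1) (hlt : lam j₁ < 1) (n : ℕ) (x : X _⦋n⦌)
    (y : (DeltaZSum m) _⦋n⦌) :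
    ((complS p j₁ lam hmass hsum hlt).d n x).toFun y
      = if y.1 = j₁ then 0 else (p.d n x).toFun y / (1 - lam j₁) := rfl

end Aux3

section Aux4
open Finset
variable {m : ℕ} [NeZero m] {X : SSet.{0}}

/-- Projection of a map `X ⟶ ⊔ Δ` to `X ⟶ Δ`. -/
def piMap (φ : X ⟶ DeltaZSum m) : X ⟶ DeltaZ m where
  app U := TypeCat.ofHom (fun x => (φ.app U x).2)
  naturality U V α := by
    ext x
    exact congrArg Prod.snd (FunctorToTypes.naturality φ α x)

/-- Inclusion of `X ⟶ Δ` into `X ⟶ ⊔ Δ` at color `j`. -/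
def iotaMap (j : ZMod m) (ψ : X ⟶ DeltaZ m) : X ⟶ DeltaZSum m where
  app U := TypeCat.ofHom (fun x => (j, ψ.app U x))
  naturality U V α := by
    ext x
    exact Prod.ext rfl (by exact (FunctorToTypes.naturality ψ α x :))

lemma pi_iota (j : ZMod m) (ψ : X ⟶ DeltaZ m) : piMap (iotaMap j ψ) = ψ := rfl

/-- The color of a map, measured at a base vertex. -/
def colorOf (pt : X _⦋0⦌) (φ : X ⟶ DeltaZSum m) : ZMod m := (φ.app (op ⦋0⦌) pt).1

lemma color_natural (φ : X ⟶ DeltaZSum m) {U V : SimplexCategoryᵒᵖ} (α : U ⟶ V)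
    (x : X.obj U) : (φ.app V (X.map α x)).1 = (φ.app U x).1 :=
  congrArg Prod.fst (FunctorToTypes.naturality φ α x)

lemma color_vertex (hX : SConnected X) (φ : X ⟶ DeltaZSum m) (a b : X _⦋0⦌) :
    (φ.app (op ⦋0⦌) a).1 = (φ.app (op ⦋0⦌) b).1 := by
  induction hX a b with
  | rel u v h =>
    obtain ⟨σ, h1, h0⟩ := h
    rw [← h1, ← h0]
    have e1 := color_natural φ ((SimplexCategory.δ 1).op) σ
    have e0 := color_natural φ ((SimplexCategory.δ 0).op) σ
    exact e1.trans e0.symm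
  | refl u => rfl
  | symm u v _ ih => exact ih.symm
  | trans u v w _ _ ih1 ih2 => exact ih1.trans ih2

lemma colorConst (hX : SConnected X) (pt : X _⦋0⦌) (φ : X ⟶ DeltaZSum m)
    (U : SimplexCategoryᵒᵖ) (x : X.obj U) : (φ.app U x).1 = colorOf pt φ := by
  have e1 := (color_natural φ ((SimplexCategory.const ⦋0⦌ U.unop 0).op) x).symm
  refine e1.trans ?_
  exact color_vertex hX φ _ pt

lemma iota_color_pi (hX : SConnected X) (pt : X _⦋0⦌) (φ : X ⟶ DeltaZSum m) :
    iotaMap (colorOf pt φ) (piMap φ) = φ := by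
  apply NatTrans.ext
  funext U
  ext x
  exact Prod.ext (colorConst hX pt φ U x).symm rfl

lemma iota_inj (j : ZMod m) : Function.Injective (iotaMap (X := X) j) := by
  intro ψ ψ' h
  apply NatTrans.ext
  funext U
  ext x
  exact congrArg Prod.snd (ConcreteCategory.congr_hom (congrFun (congrArg NatTrans.app h) U) x)

lemma set_image (hX : SConnected X) (pt : X _⦋0⦌) (j : ZMod m) (n : ℕ) (x : X _⦋n⦌)
    (a : DCell m n) :
    setOf (fun φ : X ⟶ DeltaZSum m => φ.app (op ⦋n⦌) x = (j, a))
      = (iotaMap (X := X) j) '' setOf (fun ψ : X ⟶ DeltaZ m => ψ.app (op ⦋n⦌) x = a) := by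
  ext φ
  simp only [Set.mem_setOf_eq, Set.mem_image]
  constructor
  · intro h
    refine ⟨piMap φ, ?_, ?_⟩
    · show (φ.app (op ⦋n⦌) x).2 = a
      rw [h]
    · have hc : colorOf pt φ = j := by
        have hcc := colorConst hX pt φ (op ⦋n⦌) x
        rw [h] at hcc
        exact hcc.symm
      rw [← hc]
      exact iota_color_pi hX pt φ
  · rintro ⟨ψ, hψ, rfl⟩
    show (j, ψ.app (op ⦋n⦌) x) = (j, a)
    rw [hψ]
    rfl

lemma transport (hX : SConnected X) (pt : X _⦋0⦌) (Qf : (X ⟶ DeltaZSum m) → ℝ≥0)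
    (j : ZMod m) (n : ℕ) (x : X _⦋n⦌) (a : DCell m n) :
    ∑ᶠ φ ∈ setOf (fun φ : X ⟶ DeltaZSum m => φ.app (op ⦋n⦌) x = (j, a)), Qf φ
      = ∑ᶠ ψ ∈ setOf (fun ψ : X ⟶ DeltaZ m => ψ.app (op ⦋n⦌) x = a), Qf (iotaMap j ψ) := by
  rw [set_image hX pt j n x a]
  exact finsum_mem_image ((iota_inj j).injOn)

end Aux4

section Aux5
open Finset
variable {m : ℕ} [NeZero m] {X : SSet.{0}}

lemma nc_iff (hX : SConnected X) (pt : X _⦋0⦌) (p : SDist X (DeltaZSum m))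
    (lam : ZMod m → ℝ≥0)
    (hmass : ∀ (j : ZMod m) (n : ℕ) (x : X _⦋n⦌), massOf p j n x = lam j)
    (pc : (j : ZMod m) → lam j ≠ 0 → SDist X (DeltaZ m))
    (hpc : ∀ (j : ZMod m) (hj : lam j ≠ 0) (n : ℕ) (x : X _⦋n⦌) (a : DCell m n),
      ((pc j hj).d n x).toFun a = (p.d n x).toFun (j, a) / lam j) :
    Noncontextual p ↔ ∀ (j : ZMod m) (hj : lam j ≠ 0), Noncontextual (pc j hj) := by
  classical
  constructor
  · rintro ⟨Q, hQ⟩ j hj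
    have hg : (Function.support (fun ψ : X ⟶ DeltaZ m => Q.toFun (iotaMap j ψ))).Finite :=
      Set.Finite.preimage ((iota_inj j).injOn) Q.finite_support
    have hQsum : ∑ᶠ ψ : X ⟶ DeltaZ m, Q.toFun (iotaMap j ψ) = lam j := by
      rw [← fiber_sum (fun ψ : X ⟶ DeltaZ m => Q.toFun (iotaMap j ψ)) hg
        (fun ψ : X ⟶ DeltaZ m => (ψ.app (op ⦋0⦌) pt : DCell m 0))]
      rw [← hmass j 0 pt]
      show _ = ∑ b : DCell m 0, (p.d 0 pt).toFun (j, b)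
      apply Finset.sum_congr rfl
      intro b _
      exact ((hQ 0 pt (j, b)).trans (transport hX pt Q.toFun j 0 pt b)).symm
    refine ⟨⟨fun ψ => Q.toFun (iotaMap j ψ) / lam j, ?_, ?_⟩, ?_⟩
    · apply hg.subset
      intro ψ hψ
      simp only [Function.mem_support] at hψ ⊢
      intro h0
      exact hψ (by rw [h0, zero_div])
    · rw [finsum_div' (fun ψ : X ⟶ DeltaZ m => Q.toFun (iotaMap j ψ)) (lam j) hg,
        hQsum, div_self hj]
    · intro n x a
      show ((pc j hj).d n x).toFun a
          = ∑ᶠ ψ ∈ setOf (fun ψ : X ⟶ DeltaZ m => ψ.app (op ⦋n⦌) x = a),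
              Q.toFun (iotaMap j ψ) / lam j
      rw [hpc j hj n x a, hQ n x (j, a), transport hX pt Q.toFun j n x a]
      exact (finsum_mem_div' (fun ψ : X ⟶ DeltaZ m => Q.toFun (iotaMap j ψ)) _ _ hg).symm
  · intro hall
    set Qf : (X ⟶ DeltaZSum m) → ℝ≥0 := fun φ =>
      if h : lam (colorOf pt φ) ≠ 0 then
        lam (colorOf pt φ) * ((hall (colorOf pt φ) h).choose.toFun (piMap φ))
      else 0 with hQf
    have hQι : ∀ (j : ZMod m) (hj : lam j ≠ 0) (ψ : X ⟶ DeltaZ m),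
        Qf (iotaMap j ψ) = lam j * ((hall j hj).choose.toFun ψ) := by
      intro j hj ψ
      show (if h : lam j ≠ 0 then
          lam j * ((hall j h).choose.toFun ψ) else 0) = _
      rw [dif_pos hj]
    have hQι0 : ∀ (j : ZMod m), lam j = 0 → ∀ ψ : X ⟶ DeltaZ m,
        Qf (iotaMap j ψ) = 0 := by
      intro j hj ψ
      show (if h : lam j ≠ 0 then
          lam j * ((hall j h).choose.toFun ψ) else 0) = 0
      rw [dif_neg (by simpa using hj)]
    have marg : ∀ (n : ℕ) (x : X _⦋n⦌) (j : ZMod m) (a : DCell m n),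
        ∑ᶠ φ ∈ setOf (fun φ : X ⟶ DeltaZSum m => φ.app (op ⦋n⦌) x = (j, a)), Qf φ
          = (p.d n x).toFun (j, a) := by
      intro n x j a
      rw [transport hX pt Qf j n x a]
      by_cases hj : lam j ≠ 0
      · have e1 : ∑ᶠ ψ ∈ setOf (fun ψ : X ⟶ DeltaZ m => ψ.app (op ⦋n⦌) x = a), Qf (iotaMap j ψ)
            = ∑ᶠ ψ ∈ setOf (fun ψ : X ⟶ DeltaZ m => ψ.app (op ⦋n⦌) x = a),
                lam j * ((hall j hj).choose.toFun ψ) :=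
          finsum_mem_congr rfl (fun ψ _ => hQι j hj ψ)
        rw [e1, finsum_mem_mul_left' ((hall j hj).choose.toFun) _ (lam j)
          ((hall j hj).choose.finite_support)]
        rw [← (hall j hj).choose_spec n x a, hpc j hj n x a]
        rw [mul_comm]
        exact div_mul_cancel₀ _ hj
      · push_neg at hj
        have e1 : ∑ᶠ ψ ∈ setOf (fun ψ : X ⟶ DeltaZ m => ψ.app (op ⦋n⦌) x = a), Qf (iotaMap j ψ)
            = ∑ᶠ ψ ∈ setOf (fun ψ : X ⟶ DeltaZ m => ψ.app (op ⦋n⦌) x = a), (0 : ℝ≥0) :=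
          finsum_mem_congr rfl (fun ψ _ => hQι0 j hj ψ)
        rw [e1]
        have e2 : (p.d n x).toFun (j, a) = 0 := by
          refine le_antisymm ?_ (zero_le)
          rw [← hj, ← hmass j n x]
          exact single_le_mass p j x a
        rw [e2]
        simp
    have hsupp : (Function.support Qf).Finite := by
      have hbig : (⋃ j : ZMod m, (iotaMap (X := X) j) ''
          (⋃ (hj : lam j ≠ 0), Function.support ((hall j hj).choose.toFun))).Finite := by
        apply Set.finite_iUnion
        intro j
        apply Set.Finite.image
        apply Set.finite_iUnion
        intro hj
        exact (hall j hj).choose.finite_support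
      apply hbig.subset
      intro φ hφ
      simp only [Function.mem_support] at hφ
      by_cases hc : lam (colorOf pt φ) ≠ 0
      · have hval : Qf φ = lam (colorOf pt φ)
            * ((hall (colorOf pt φ) hc).choose.toFun (piMap φ)) := by
          show (if h : lam (colorOf pt φ) ≠ 0 then _ else 0) = _
          rw [dif_pos hc]
        rw [hval] at hφ
        have hne : ((hall (colorOf pt φ) hc).choose.toFun (piMap φ)) ≠ 0 :=
          fun h0 => hφ (by rw [h0, mul_zero])
        refine Set.mem_iUnion.mpr ⟨colorOf pt φ, ⟨piMap φ, ?_, iota_color_pi hX pt φ⟩⟩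
        exact Set.mem_iUnion.mpr ⟨hc, hne⟩
      · exfalso
        apply hφ
        show (if h : lam (colorOf pt φ) ≠ 0 then _ else 0) = 0
        rw [dif_neg hc]
    have hone : ∑ᶠ φ : X ⟶ DeltaZSum m, Qf φ = 1 := by
      rw [← fiber_sum Qf hsupp (fun φ : X ⟶ DeltaZSum m => (φ.app (op ⦋0⦌) pt : ZCell m 0))]
      rw [← total_sum p pt]
      apply Finset.sum_congr rfl
      intro y _
      exact marg 0 pt y.1 y.2
    exact ⟨⟨Qf, hsupp, hone⟩, fun n x y => (marg n x y.1 y.2).symm⟩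

end Aux5

section Aux6
open Finset
variable {m : ℕ} [NeZero m] {X : SSet.{0}}

lemma mix_one_real {A B t : ℝ} (hA : A ≤ 1) (hB : B ≤ 1) (ht0 : 0 < t) (ht1 : t < 1)
    (h : (1 : ℝ) = t * A + (1 - t) * B) : A = 1 ∧ B = 1 := by
  constructor <;> nlinarith

lemma mass_le_one (q : SDist X (DeltaZSum m)) (j : ZMod m) {n : ℕ} (x : X _⦋n⦌) :
    massOf q j n x ≤ 1 := by
  rw [← mass_sum q x]
  exact Finset.single_le_sum (f := fun j => massOf q j n x)
    (fun _ _ => zero_le) (Finset.mem_univ j)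

lemma mass_other_zero (q : SDist X (DeltaZSum m)) {j : ZMod m} {n : ℕ} {x : X _⦋n⦌}
    (h1 : massOf q j n x = 1) {j' : ZMod m} (hne : j' ≠ j) : massOf q j' n x = 0 := by
  have hs := mass_sum q x
  rw [← Finset.sum_erase_add Finset.univ _ (Finset.mem_univ j), h1] at hs
  have h0 : ∑ i ∈ Finset.univ.erase j, massOf q i n x = 0 := by simpa using hs
  exact (Finset.sum_eq_zero_iff.mp h0) j' (Finset.mem_erase.mpr ⟨hne, Finset.mem_univ _⟩)

lemma point_zero (q : SDist X (DeltaZSum m)) {j : ZMod m} {n : ℕ} {x : X _⦋n⦌}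
    (h0 : massOf q j n x = 0) (a : DCell m n) : (q.d n x).toFun (j, a) = 0 :=
  le_antisymm (h0 ▸ single_le_mass q j x a) (zero_le)

lemma vertex_iff (hX : SConnected X) (pt : X _⦋0⦌) (p : SDist X (DeltaZSum m))
    (lam : ZMod m → ℝ≥0)
    (hmass : ∀ (j : ZMod m) (n : ℕ) (x : X _⦋n⦌), massOf p j n x = lam j)
    (hsum : ∑ j : ZMod m, lam j = 1)
    (pc : (j : ZMod m) → lam j ≠ 0 → SDist X (DeltaZ m))
    (hpc : ∀ (j : ZMod m) (hj : lam j ≠ 0) (n : ℕ) (x : X _⦋n⦌) (a : DCell m n),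
      ((pc j hj).d n x).toFun a = (p.d n x).toFun (j, a) / lam j) :
    IsVertex p ↔ ∃ (j : ZMod m) (_ : lam j = 1) (hj : lam j ≠ 0),
      IsVertex (pc j hj) := by
  classical
  have hlamz : ∀ j : ZMod m, lam j = 1 → ∀ j' : ZMod m, j' ≠ j → lam j' = 0 := by
    intro j hj1 j' hne
    have hs := hsum
    rw [← Finset.sum_erase_add Finset.univ _ (Finset.mem_univ j), hj1] at hs
    have h0 : ∑ i ∈ Finset.univ.erase j, lam i = 0 := by simpa using hs
    exact (Finset.sum_eq_zero_iff.mp h0) j' (Finset.mem_erase.mpr ⟨hne, Finset.mem_univ _⟩)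
  constructor
  · intro hv
    have hex : ∃ j : ZMod m, lam j = 1 := by
      by_contra hno
      push_neg at hno
      have hj1 : ∃ j₁ : ZMod m, lam j₁ ≠ 0 := by
        by_contra h0
        push_neg at h0
        rw [Finset.sum_congr rfl (fun j _ => h0 j)] at hsum
        simp at hsum
      obtain ⟨j₁, hj₁0⟩ := hj1
      have hle : lam j₁ ≤ 1 := by
        rw [← hsum]
        exact Finset.single_le_sum (fun _ _ => zero_le) (Finset.mem_univ j₁)
      have hlt : lam j₁ < 1 := lt_of_le_of_ne hle (hno j₁)
      have hlam1ne : (1 : ℝ≥0) - lam j₁ ≠ 0 :=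
        fun h => absurd (tsub_eq_zero_iff_le.mp h) (not_le.mpr hlt)
      set qq := liftS j₁ (component p j₁ (lam j₁) (hmass j₁) hj₁0) with hqq
      set qq' := complS p j₁ lam hmass hsum hlt with hqq'
      have hmix : ∀ (n : ℕ) (x : X _⦋n⦌) (y : (DeltaZSum m) _⦋n⦌),
          ((p.d n x).toFun y : ℝ) = (lam j₁ : ℝ) * ((qq.d n x).toFun y : ℝ)
            + (1 - (lam j₁ : ℝ)) * ((qq'.d n x).toFun y : ℝ) := by
        intro n x y
        by_cases hy : y.1 = j₁
        · have hq : (qq.d n x).toFun y = (p.d n x).toFun (j₁, y.2) / lam j₁ := by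
            rw [hqq, liftS_apply, if_pos hy]
            rfl
          have hq' : (qq'.d n x).toFun y = 0 := by
            rw [hqq', complS_apply, if_pos hy]
          rw [hq, hq', NNReal.coe_zero, mul_zero, add_zero, ← NNReal.coe_mul,
            mul_comm, div_mul_cancel₀ _ hj₁0]
          exact congrArg (fun z => ((p.d n x).toFun z : ℝ)) (Prod.ext hy rfl)
        · have hq : (qq.d n x).toFun y = 0 := by
            rw [hqq, liftS_apply, if_neg hy]
          have hq' : (qq'.d n x).toFun y = (p.d n x).toFun y / (1 - lam j₁) := by
            rw [hqq', complS_apply, if_neg hy]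
          rw [hq, hq', NNReal.coe_zero, mul_zero, zero_add]
          rw [show (1 : ℝ) - (lam j₁ : ℝ) = ((1 - lam j₁ : ℝ≥0) : ℝ) from
            (NNReal.coe_sub hle).symm]
          rw [← NNReal.coe_mul, mul_comm, div_mul_cancel₀ _ hlam1ne]
      have heq := hv qq qq' (lam j₁ : ℝ)
        (by exact_mod_cast pos_iff_ne_zero.mpr hj₁0)
        (by exact_mod_cast hlt) hmix
      have h1 : massOf qq j₁ 0 pt = 1 := by
        show ∑ b : DCell m 0, (qq.d 0 pt).toFun (j₁, b) = 1
        have hb : ∀ b : DCell m 0, (qq.d 0 pt).toFun (j₁, b)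
            = (p.d 0 pt).toFun (j₁, b) / lam j₁ := by
          intro b
          rw [hqq, liftS_apply (y := ((j₁, b) : (DeltaZSum m) _⦋0⦌)), if_pos rfl]
          rfl
        rw [Finset.sum_congr rfl (fun b _ => hb b), ← Finset.sum_div]
        rw [show ∑ b : DCell m 0, (p.d 0 pt).toFun (j₁, b) = lam j₁ from hmass j₁ 0 pt]
        exact div_self hj₁0
      have h2 : massOf qq' j₁ 0 pt = 0 := by
        show ∑ b : DCell m 0, (qq'.d 0 pt).toFun (j₁, b) = 0
        apply Finset.sum_eq_zero
        intro b _
        rw [hqq', complS_apply (y := ((j₁, b) : (DeltaZSum m) _⦋0⦌)), if_pos rfl]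
      rw [heq, h2] at h1
      exact zero_ne_one h1
    obtain ⟨j, hj1⟩ := hex
    have hj0 : lam j ≠ 0 := by rw [hj1]; exact one_ne_zero
    refine ⟨j, hj1, hj0, ?_⟩
    intro qc qc' t ht0 ht1 hmixc
    have hpzero : ∀ (n : ℕ) (x : X _⦋n⦌) (y : ZCell m n), y.1 ≠ j →
        (p.d n x).toFun y = 0 := by
      intro n x y hy
      refine le_antisymm ?_ (zero_le)
      have h := single_le_mass p y.1 x y.2
      rw [hmass y.1 n x, hlamz j hj1 y.1 hy] at h
      exact h
    have hmix2 : ∀ (n : ℕ) (x : X _⦋n⦌) (y : (DeltaZSum m) _⦋n⦌),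
        ((p.d n x).toFun y : ℝ) = t * (((liftS j qc).d n x).toFun y : ℝ)
          + (1 - t) * (((liftS j qc').d n x).toFun y : ℝ) := by
      intro n x y
      by_cases hy : y.1 = j
      · rw [liftS_apply, liftS_apply, if_pos hy, if_pos hy]
        have hp : (p.d n x).toFun y = ((pc j hj0).d n x).toFun y.2 := by
          rw [hpc j hj0 n x y.2, hj1, div_one]
          exact congrArg (p.d n x).toFun (Prod.ext hy rfl)
        rw [hp]
        exact hmixc n x y.2
      · rw [liftS_apply, liftS_apply, if_neg hy, if_neg hy, hpzero n x y hy]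
        norm_num
    have heq := hv (liftS j qc) (liftS j qc') t ht0 ht1 hmix2
    apply SDist.ext'
    intro n x a
    have e := congrArg (fun s : SDist X (DeltaZSum m) => (s.d n x).toFun (j, a)) heq
    simp only [liftS_apply (y := ((j, a) : (DeltaZSum m) _⦋n⦌))] at e
    simpa using e
  · rintro ⟨j, hj1, hj0, hvc⟩
    intro q q' t ht0 ht1 hmix
    have hqm : ∀ (n : ℕ) (x : X _⦋n⦌), massOf q j n x = 1 ∧ massOf q' j n x = 1 := by
      intro n x
      have c1 : ((massOf q j n x : ℝ≥0) : ℝ)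
          = ∑ a : DCell m n, ((q.d n x).toFun (j, a) : ℝ) := NNReal.coe_sum _ _
      have c2 : ((massOf q' j n x : ℝ≥0) : ℝ)
          = ∑ a : DCell m n, ((q'.d n x).toFun (j, a) : ℝ) := NNReal.coe_sum _ _
      have hc : ((massOf p j n x : ℝ≥0) : ℝ)
          = t * (massOf q j n x : ℝ) + (1 - t) * (massOf q' j n x : ℝ) := by
        have c0 : ((massOf p j n x : ℝ≥0) : ℝ)
            = ∑ a : DCell m n, ((p.d n x).toFun (j, a) : ℝ) := NNReal.coe_sum _ _
        have e : ∑ a : DCell m n, ((p.d n x).toFun (j, a) : ℝ)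
            = ∑ a : DCell m n, (t * ((q.d n x).toFun (j, a) : ℝ)
              + (1 - t) * ((q'.d n x).toFun (j, a) : ℝ)) :=
          Finset.sum_congr rfl (fun a _ => hmix n x (j, a))
        rw [c0, e, Finset.sum_add_distrib, ← Finset.mul_sum, ← Finset.mul_sum, c1, c2]
      rw [hmass j n x, hj1] at hc
      have hA : (massOf q j n x : ℝ) ≤ 1 := by exact_mod_cast mass_le_one q j x
      have hB : (massOf q' j n x : ℝ) ≤ 1 := by exact_mod_cast mass_le_one q' j x
      have hres := mix_one_real hA hB ht0 ht1 (by exact_mod_cast hc)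
      exact ⟨by exact_mod_cast hres.1, by exact_mod_cast hres.2⟩
    set qcc := component q j 1 (fun n x => (hqm n x).1) one_ne_zero with hqcc
    set qcc' := component q' j 1 (fun n x => (hqm n x).2) one_ne_zero with hqcc'
    have hcc := hvc qcc qcc' t ht0 ht1 ?_
    · apply SDist.ext'
      intro n x y
      by_cases hy : y.1 = j
      · have e := congrArg (fun s : SDist X (DeltaZ m) => (s.d n x).toFun y.2) hcc
        have e' : (q.d n x).toFun (j, y.2) / 1 = (q'.d n x).toFun (j, y.2) / 1 := e
        rw [div_one, div_one] at e'
        calc (q.d n x).toFun y = (q.d n x).toFun (j, y.2) :=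
              congrArg (q.d n x).toFun (Prod.ext hy rfl)
          _ = (q'.d n x).toFun (j, y.2) := e'
          _ = (q'.d n x).toFun y :=
              (congrArg (q'.d n x).toFun
                (Prod.ext (x := y) (y := (j, y.2)) hy rfl)).symm
      · have z1 : (q.d n x).toFun (y.1, y.2) = 0 :=
          point_zero q (mass_other_zero q (hqm n x).1 hy) y.2
        have z2 : (q'.d n x).toFun (y.1, y.2) = 0 :=
          point_zero q' (mass_other_zero q' (hqm n x).2 hy) y.2
        calc (q.d n x).toFun y = 0 := z1
          _ = (q'.d n x).toFun y := z2.symm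
    · intro n x a
      have hl : ((pc j hj0).d n x).toFun a = (p.d n x).toFun (j, a) := by
        rw [hpc j hj0 n x a, hj1, div_one]
      have hq1 : (qcc.d n x).toFun a = (q.d n x).toFun (j, a) := by
        have : (qcc.d n x).toFun a = (q.d n x).toFun (j, a) / 1 := rfl
        rw [this, div_one]
      have hq2 : (qcc'.d n x).toFun a = (q'.d n x).toFun (j, a) := by
        have : (qcc'.d n x).toFun a = (q'.d n x).toFun (j, a) / 1 := rfl
        rw [this, div_one]
      rw [hl, hq1, hq2]
      exact hmix n x (j, a)

end Aux6

section Aux7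
open Finset
open scoped Classical

/-- The point mass distribution. -/
noncomputable def pointF {S : Type u} (s0 : S) : FDist S where
  toFun := fun s => if s = s0 then 1 else 0
  finite_support := (Set.finite_singleton s0).subset (fun s hs => by
    simp only [Function.mem_support] at hs
    by_contra hss
    exact hs (if_neg (by simpa using hss)))
  sum_one := by
    rw [finsum_eq_single _ s0 (fun b hb => if_neg hb)]
    exact if_pos rfl

/-- The unique map out of an empty simplicial set. -/
def emptyMap {X : SSet.{u}} (h : ∀ U, IsEmpty (X.obj U)) (Y : SSet.{u}) : X ⟶ Y where
  app U := TypeCat.ofHom (fun x => ((h U).elim x))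
  naturality := by
    intro U V α
    ext x
    exact ((h U).elim x)

end Aux7


/-- Theorem 4.7 (Theorem 1.1) of the paper, via the identification of simplicial
distributions on the cone scenario `(CX, Δ_{ℤ_m})` with those on `(X, ⊔_{ℤ_m} Δ_{ℤ_m})`:
a simplicial distribution `p` on `(X, ⊔_{ℤ_m} Δ_{ℤ_m})` decomposes into masses `λ_j` and
components `p^{(j)}`; `p` is noncontextual iff all components are, and `p` is a vertex iff
some `λ_j = 1` and `p^{(j)}` is a vertex. -/
theorem stmt0 (m : ℕ) [NeZero m] (X : SSet.{0}) (hX : SConnected X)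
    (p : SDist X (DeltaZSum m)) :
    ∃ lam : ZMod m → ℝ≥0,
      (∀ (j : ZMod m) (n : ℕ) (x : X _⦋n⦌),
        ∑ᶠ a : Fin (n + 1) → ZMod m, (p.d n x).toFun (j, a) = lam j) ∧
      (∑ j : ZMod m, lam j = 1) ∧
      (∀ j : ZMod m, lam j ≠ 0 → ∃ pj : SDist X (DeltaZ m),
        ∀ (n : ℕ) (x : X _⦋n⦌) (a : Fin (n + 1) → ZMod m),
          (pj.d n x).toFun a = (p.d n x).toFun (j, a) / lam j) ∧
      (∀ pc : (j : ZMod m) → lam j ≠ 0 → SDist X (DeltaZ m),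
        (∀ (j : ZMod m) (hj : lam j ≠ 0) (n : ℕ) (x : X _⦋n⦌) (a : Fin (n + 1) → ZMod m),
          ((pc j hj).d n x).toFun a = (p.d n x).toFun (j, a) / lam j) →
        ((Noncontextual p ↔ ∀ (j : ZMod m) (hj : lam j ≠ 0), Noncontextual (pc j hj)) ∧
         (IsVertex p ↔ ∃ (j : ZMod m) (_ : lam j = 1) (hj : lam j ≠ 0),
            IsVertex (pc j hj)))) := by
    classical
  by_cases hne : Nonempty (X _⦋0⦌)
  · obtain ⟨pt⟩ := hne
    have hmass : ∀ (j : ZMod m) (n : ℕ) (x : X _⦋n⦌), massOf p j n x = massOf p j 0 pt :=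
      fun j n x => massOf_const hX p j x pt
    refine ⟨fun j => massOf p j 0 pt, ?_, mass_sum p pt, ?_, ?_⟩
    · intro j n x
      rw [finsum_eq_sum_of_fintype]
      exact hmass j n x
    · intro j hj
      exact ⟨component p j _ (hmass j) hj, fun n x a => rfl⟩
    · intro pc hpc
      exact ⟨nc_iff hX pt p _ hmass pc hpc,
        vertex_iff hX pt p _ hmass (mass_sum p pt) pc hpc⟩
  · have hU : ∀ U : SimplexCategoryᵒᵖ, IsEmpty (X.obj U) :=
      fun U => ⟨fun x => hne ⟨X.map (SimplexCategory.const ⦋0⦌ U.unop 0).op x⟩⟩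
    have hn : ∀ n : ℕ, IsEmpty (X _⦋n⦌) := fun n => hU (op ⦋n⦌)
    refine ⟨fun j => if j = 0 then 1 else 0, ?_, ?_, ?_, ?_⟩
    · intro j n x
      exact ((hn n).elim x)
    · rw [Finset.sum_ite_eq' Finset.univ (0 : ZMod m) (fun _ => (1 : ℝ≥0))]
      simp
    · intro j hj
      refine ⟨⟨fun n x => ((hn n).elim x), ?_⟩, ?_⟩
      · intro k n α x y
        exact ((hn n).elim x)
      · intro n x a
        exact ((hn n).elim x)
    · intro pc hpc
      constructor
      · have ncp : Noncontextual p := by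
          refine ⟨pointF (emptyMap hU (DeltaZSum m)), ?_⟩
          intro n x y
          exact ((hn n).elim x)
        have ncj : ∀ (j : ZMod m) (hj : (if j = 0 then (1:ℝ≥0) else 0) ≠ 0),
            Noncontextual (pc j hj) := by
          intro j hj
          refine ⟨pointF (emptyMap hU (DeltaZ m)), ?_⟩
          intro n x y
          exact ((hn n).elim x)
        exact ⟨fun _ => ncj, fun _ => ncp⟩
      · have vallD : ∀ (q q' : SDist X (DeltaZ m)), q = q' :=
          fun q q' => SDist.ext' (fun n x y => ((hn n).elim x))
        have vall : ∀ (q q' : SDist X (DeltaZSum m)), q = q' :=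
          fun q q' => SDist.ext' (fun n x y => ((hn n).elim x))
        constructor
        · intro _
          refine ⟨0, by simp, by simp, ?_⟩
          intro qc qc' t _ _ _
          exact vallD qc qc'
        · intro _
          intro q q' t _ _ _
          exact vall q q'
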